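/- For real d ≥ 0 and 0 < θ < π, the function f(x) = -cos(x)·cos(θ - x) + sin(x)·sin(θ - x)·cosh(d) is monotonically increasing on [0, θ/2]. -/
import Mathlib


open Real

theorem monotone_balanced_angle (d θ : ℝ) (hd : 0 ≤ d) (hθ0 : 0 < θ) (hθπ : θ < π) :
    MonotoneOn (fun x : ℝ => -Real.cos x * Real.cos (θ - x)
      + Real.sin x * Real.sin (θ - x) * Real.cosh d) (Set.Icc 0 (θ / 2)) := by
  have key : ∀ x : ℝ, -Real.cos x * Real.cos (θ - x)
      + Real.sin x * Real.sin (θ - x) * Real.cosh d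
      = -Real.cos θ + (Real.cos (θ - 2*x) - Real.cos θ) / 2 * (Real.cosh d - 1) := by
    intro x
    have h1 := Real.cos_sub_cos (θ - 2*x) θ
    have h2 : Real.cos θ = Real.cos (x + (θ - x)) := by ring_nf
    rw [Real.cos_add] at h2
    have h3 : (θ - 2*x + θ) / 2 = θ - x := by ring
    have h4 : (θ - 2*x - θ) / 2 = -x := by ring
    rw [h3, h4, Real.sin_neg] at h1
    linear_combination (1 - Real.cosh d) / 2 * h1 + h2
  intro x hx y hy hxy
  simp only
  rw [key x, key y]
  have hch : 1 ≤ Real.cosh d := Real.one_le_cosh d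
  have hc : Real.cos (θ - 2*x) ≤ Real.cos (θ - 2*y) := by
    apply Real.cos_le_cos_of_nonneg_of_le_pi
    · linarith [hy.2]
    · linarith [hx.1, hθπ]
    · linarith
  nlinarith [hc, hch]
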